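/- Let G be a simple graph whose vertex set is partitioned into two sets P and L such that every edge joins a vertex of P to a vertex of L. Let k ≥ 1 and f ≥ 1 be natural numbers, suppose every vertex in P has degree exactly k+1, every vertex in L has degree exactly f+1, and G has no cycle of length less than 12. Then for every vertex p ∈ P, the number of vertices p' ∈ P at graph distance exactly 2 from p is (k+1)f, and the number of vertices p' ∈ P at graph distance exactly 4 from p is k(k+1)f². -/

import Mathlib

open SimpleGraph

private lemma two_paths_cycle' {V : Type} (G : SimpleGraph V) {u v : V} (p q : G.Walk u v)
    (hp : p.IsPath) (hq : q.IsPath) (hne : p ≠ q) :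
    ∃ (w : V) (c : G.Walk w w), c.IsCycle ∧ c.length ≤ p.length + q.length := by
  classical
  set s : Set (Sym2 V) := {e | e ∈ p.edges ∨ e ∈ q.edges} with hs
  set H : SimpleGraph V := SimpleGraph.fromEdgeSet s with hH
  have hpe : ∀ e ∈ p.edges, e ∈ H.edgeSet := by
    intro e he
    rw [hH, edgeSet_fromEdgeSet]
    exact ⟨Or.inl he, G.not_isDiag_of_mem_edgeSet (p.edges_subset_edgeSet he)⟩
  have hqe : ∀ e ∈ q.edges, e ∈ H.edgeSet := by
    intro e he
    rw [hH, edgeSet_fromEdgeSet]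
    exact ⟨Or.inr he, G.not_isDiag_of_mem_edgeSet (q.edges_subset_edgeSet he)⟩
  have hHe : ∀ e ∈ H.edgeSet, e ∈ G.edgeSet := by
    intro e he
    rw [hH, edgeSet_fromEdgeSet] at he
    rcases he.1 with h | h
    · exact p.edges_subset_edgeSet h
    · exact q.edges_subset_edgeSet h
  have hnac : ¬ H.IsAcyclic := by
    intro hac
    have heq := (isAcyclic_iff_path_unique.mp hac)
      ⟨p.transfer H hpe, hp.transfer hpe⟩ ⟨q.transfer H hqe, hq.transfer hqe⟩
    have heq' : p.transfer H hpe = q.transfer H hqe := congrArg Subtype.val heq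
    apply hne
    have := congrArg (fun r : H.Walk u v => r.transfer G
      (fun e he => hHe e (r.edges_subset_edgeSet he))) heq'
    simpa [Walk.transfer_transfer, Walk.transfer_self] using this
  rw [IsAcyclic] at hnac
  push_neg at hnac
  obtain ⟨w, c, hc⟩ := hnac
  refine ⟨w, c.transfer G (fun e he => hHe e (c.edges_subset_edgeSet he)), hc.transfer _, ?_⟩
  rw [Walk.length_transfer, ← Walk.length_edges]
  have hnd : c.edges.Nodup := hc.edges_nodup
  have hsub : c.edges ⊆ p.edges ++ q.edges := by
    intro e he
    have h2 := hHe _ (c.edges_subset_edgeSet he)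
    have h3 : e ∈ H.edgeSet := c.edges_subset_edgeSet he
    rw [hH, edgeSet_fromEdgeSet] at h3
    exact List.mem_append.mpr h3.1
  calc c.edges.length = c.edges.toFinset.card := (List.toFinset_card_of_nodup hnd).symm
    _ ≤ (p.edges ++ q.edges).toFinset.card := Finset.card_le_card (fun e he => by
        simp only [List.mem_toFinset] at he ⊢; exact hsub he)
    _ ≤ (p.edges ++ q.edges).length := (p.edges ++ q.edges).toFinset_card_le
    _ = p.length + q.length := by simp

/-- In a bipartite graph with parts `P` and `L`, where every vertex of `P`
has degree exactly `k+1`, every vertex of `L` has degree exactly `f+1`, and there is no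
cycle of length less than `12`, for every `p ∈ P` the number of vertices of `P` at graph
distance exactly `2` from `p` is `(k+1)f` and the number at distance exactly `4` is
`k(k+1)f²`. -/
theorem stmt_2 (V : Type) [Fintype V] (G : SimpleGraph V) [DecidableRel G.Adj]
    (P L : Set V) (hdisj : P ∩ L = ∅) (huniv : P ∪ L = Set.univ)
    (hbip : ∀ x y, G.Adj x y → (x ∈ P ∧ y ∈ L) ∨ (x ∈ L ∧ y ∈ P))
    (k f : ℕ) (hk : 1 ≤ k) (hf : 1 ≤ f)
    (hdegP : ∀ v ∈ P, G.degree v = k + 1)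
    (hdegL : ∀ v ∈ L, G.degree v = f + 1)
    (hgirth : ∀ (v : V) (c : G.Walk v v), c.IsCycle → 12 ≤ c.length)
    (p : V) (hp : p ∈ P) :
    {p' : V | p' ∈ P ∧ G.dist p p' = 2}.ncard = (k + 1) * f ∧
    {p' : V | p' ∈ P ∧ G.dist p p' = 4}.ncard = k * (k + 1) * f ^ 2 := by
  classical
  -- basic side facts
  have hPL : ∀ v : V, v ∈ P ↔ v ∉ L := by
    intro v
    constructor
    · intro h hL
      exact absurd (Set.mem_inter h hL) (by rw [hdisj]; exact not_false)
    · intro h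
      rcases (huniv ▸ Set.mem_univ v : v ∈ P ∪ L) with h' | h'
      · exact h'
      · exact absurd h' h
  have hadjPL : ∀ {x y : V}, G.Adj x y → (x ∈ P ↔ y ∉ P) := by
    intro x y hxy
    rcases hbip x y hxy with ⟨hx, hy⟩ | ⟨hx, hy⟩
    · have hy' : y ∉ P := fun h => (hPL y).mp h hy
      simp [hx, hy']
    · have hx' : x ∉ P := fun h => (hPL x).mp h hx
      simp [hx', hy]
  -- parity along walks
  have parity : ∀ {u v : V} (w : G.Walk u v), ((u ∈ P ↔ v ∈ P) ↔ Even w.length) := by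
    intro u v w
    induction w with
    | nil => simp
    | @cons a b c h q ih =>
      have hab := hadjPL h
      rw [Walk.length_cons, Nat.even_add_one, ← ih]
      tauto
  -- parity of distance
  have parity_dist : ∀ v : V, G.Reachable p v → (v ∈ P ↔ Even (G.dist p v)) := by
    intro v hr
    obtain ⟨w, hw⟩ := hr.exists_walk_length_eq_dist
    have h2 := parity w
    rw [hw] at h2
    rw [← h2]
    simp [hp]
  -- unique paths of small total length
  have hupath : ∀ {u v : V} (p₁ p₂ : G.Walk u v), p₁.IsPath → p₂.IsPath →
      p₁.length + p₂.length < 12 → p₁ = p₂ := by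
    intro u v p₁ p₂ h₁ h₂ hlen
    by_contra hne
    obtain ⟨w, c, hc, hcl⟩ := two_paths_cycle' G p₁ p₂ h₁ h₂ hne
    exact absurd (hgirth w c hc) (by omega)
  -- vertices on a walk from p have bounded distance
  have hsupp : ∀ {v x : V} (w : G.Walk p v), x ∈ w.support → G.dist p x ≤ w.length := by
    intro v x w hx
    exact le_trans (SimpleGraph.dist_le (w.takeUntil x hx)) (w.length_takeUntil_le hx)
  -- shortest paths exist as paths
  have hshort : ∀ v : V, G.Reachable p v → ∃ w : G.Walk p v, w.IsPath ∧ w.length = G.dist p v := by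
    intro v hr
    obtain ⟨w, hw⟩ := hr.exists_walk_length_eq_dist
    refine ⟨w.bypass, w.bypass_isPath, le_antisymm ?_ ?_⟩
    · exact hw ▸ w.length_bypass_le
    · exact SimpleGraph.dist_le _
  -- adjacent vertices have distance differing by exactly one
  have hnbr : ∀ u w : V, G.Adj u w → G.Reachable p u →
      G.dist p w = G.dist p u + 1 ∨ G.dist p u = G.dist p w + 1 := by
    intro u w huw hru
    have hrw : G.Reachable p w := hru.trans huw.reachable
    obtain ⟨wu, hwu⟩ := hru.exists_walk_length_eq_dist
    obtain ⟨ww, hww⟩ := hrw.exists_walk_length_eq_dist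
    have h1 : G.dist p w ≤ G.dist p u + 1 := by
      have := SimpleGraph.dist_le (wu.concat huw)
      rwa [Walk.length_concat, hwu] at this
    have h2 : G.dist p u ≤ G.dist p w + 1 := by
      have := SimpleGraph.dist_le (ww.concat huw.symm)
      rwa [Walk.length_concat, hww] at this
    have hne : G.dist p w ≠ G.dist p u := by
      intro heq
      have hu := parity_dist u hru
      have hw' := parity_dist w hrw
      have := hadjPL huw
      rw [hu] at this
      rw [heq] at hw'
      tauto
    omega
  -- parent existence
  have hparent : ∀ (v : V) (d : ℕ), G.dist p v = d + 1 → ∃ u, G.Adj v u ∧ G.dist p u = d := by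
    intro v d hv
    have hr : G.Reachable p v := SimpleGraph.Reachable.of_dist_ne_zero (by omega)
    obtain ⟨w, hw⟩ := hr.exists_walk_length_eq_dist
    have hnn : ¬ w.reverse.Nil := by
      rw [Walk.not_nil_iff_lt_length, Walk.length_reverse, hw]; omega
    refine ⟨w.reverse.getVert 1, Walk.adj_snd hnn, ?_⟩
    have htail : (w.reverse.tail).length + 1 = w.reverse.length :=
      Walk.length_tail_add_one hnn
    have hle : G.dist p (w.reverse.getVert 1) ≤ d := by
      have := SimpleGraph.dist_le (w.reverse.tail).reverse
      rw [Walk.length_reverse] at this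
      rw [Walk.length_reverse, hw] at htail
      show G.dist p w.reverse.snd ≤ d
      omega
    rcases hnbr v (w.reverse.getVert 1) (Walk.adj_snd hnn) hr with h | h
    · omega
    · omega
  -- parent uniqueness
  have huniq : ∀ (v : V) (d : ℕ), d + 1 ≤ 5 → G.dist p v = d + 1 →
      ∀ u₁ u₂ : V, G.Adj v u₁ → G.Adj v u₂ → G.dist p u₁ = d → G.dist p u₂ = d →
      u₁ = u₂ := by
    intro v d hd5 hv u₁ u₂ h₁ h₂ hd₁ hd₂
    have hr₁ : G.Reachable p u₁ := by
      by_contra hc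
      have := SimpleGraph.dist_eq_zero_of_not_reachable hc
      rw [this] at hd₁
      subst hd₁
      -- d = 0 : then u₁ = p? no: not reachable gives dist 0 even if ≠ p.
      -- But v adjacent to u₁ and dist p v = 1 means v adjacent to p... handle separately
      have hrv : G.Reachable p v := SimpleGraph.Reachable.of_dist_ne_zero (by omega)
      exact hc (hrv.trans h₁.reachable)
    have hr₂ : G.Reachable p u₂ := by
      have hrv : G.Reachable p v := SimpleGraph.Reachable.of_dist_ne_zero (by omega)
      exact hrv.trans h₂.reachable
    obtain ⟨w₁, hw₁p, hw₁l⟩ := hshort u₁ hr₁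
    obtain ⟨w₂, hw₂p, hw₂l⟩ := hshort u₂ hr₂
    have hv₁ : v ∉ w₁.reverse.support := by
      rw [Walk.support_reverse, List.mem_reverse]
      intro hmem
      have := hsupp w₁ hmem
      rw [hw₁l, hd₁, hv] at this
      omega
    have hv₂ : v ∉ w₂.reverse.support := by
      rw [Walk.support_reverse, List.mem_reverse]
      intro hmem
      have := hsupp w₂ hmem
      rw [hw₂l, hd₂, hv] at this
      omega
    have hc₁ : (Walk.cons h₁ w₁.reverse).IsPath := hw₁p.reverse.cons hv₁
    have hc₂ : (Walk.cons h₂ w₂.reverse).IsPath := hw₂p.reverse.cons hv₂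
    have hlen : (Walk.cons h₁ w₁.reverse).length + (Walk.cons h₂ w₂.reverse).length < 12 := by
      simp only [Walk.length_cons, Walk.length_reverse, hw₁l, hw₂l, hd₁, hd₂]
      omega
    have heq := hupath _ _ hc₁ hc₂ hlen
    have := congrArg (fun r : G.Walk v p => r.getVert 1) heq
    simpa [Walk.getVert_cons_succ] using this
  -- the distance spheres
  set S : ℕ → Finset V := fun d => Finset.univ.filter (fun v => G.dist p v = d) with hSdef
  have hSmem : ∀ (d : ℕ) (v : V), v ∈ S d ↔ G.dist p v = d := by
    intro d v
    simp [hSdef]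
  -- the first sphere
  have hS1 : (S 1).card = k + 1 := by
    have : S 1 = G.neighborFinset p := by
      ext v
      rw [hSmem, mem_neighborFinset, SimpleGraph.dist_eq_one_iff_adj]
    rw [this, card_neighborFinset_eq_degree, hdegP p hp]
  -- counting step
  have hstep : ∀ d m : ℕ, 1 ≤ d → d ≤ 4 →
      (∀ v : V, G.dist p v = d → G.degree v = m + 1) →
      (S (d + 1)).card = (S d).card * m := by
    intro d m hd1 hd4 hdeg
    have hbU : S (d + 1) = (S d).biUnion
        (fun u => (G.neighborFinset u).filter (fun w => G.dist p w = d + 1)) := by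
      ext w
      simp only [Finset.mem_biUnion, Finset.mem_filter, mem_neighborFinset, hSmem]
      constructor
      · intro hw
        obtain ⟨u, hadj, hu⟩ := hparent w d hw
        exact ⟨u, hu, hadj.symm, hw⟩
      · rintro ⟨u, hu, hadj, hw⟩
        exact hw
    rw [hbU, Finset.card_biUnion]
    · have hcard : ∀ u ∈ S d,
          ((G.neighborFinset u).filter (fun w => G.dist p w = d + 1)).card = m := by
        intro u hu
        rw [hSmem] at hu
        obtain ⟨d', rfl⟩ : ∃ d', d = d' + 1 := ⟨d - 1, by omega⟩
        obtain ⟨a, haadj, had⟩ := hparent u d' hu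
        have hset : (G.neighborFinset u).filter (fun w => G.dist p w = d' + 1 + 1)
            = G.neighborFinset u \ {a} := by
          ext w
          simp only [Finset.mem_filter, Finset.mem_sdiff, mem_neighborFinset,
            Finset.mem_singleton]
          constructor
          · rintro ⟨hadj, hw⟩
            refine ⟨hadj, ?_⟩
            rintro rfl
            omega
          · rintro ⟨hadj, hne⟩
            refine ⟨hadj, ?_⟩
            have hru : G.Reachable p u := SimpleGraph.Reachable.of_dist_ne_zero (by omega)
            rcases hnbr u w hadj hru with h | h
            · omega
            · exact absurd (huniq u d' (by omega) hu w a hadj haadj (by omega) had) hne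
        rw [hset, Finset.card_sdiff_of_subset (by
          simp only [Finset.singleton_subset_iff, mem_neighborFinset]; exact haadj),
          Finset.card_singleton, card_neighborFinset_eq_degree, hdeg u hu]
        omega
      calc ((S d).sum fun u => ((G.neighborFinset u).filter
            (fun w => G.dist p w = d + 1)).card)
          = (S d).sum (fun _ => m) := Finset.sum_congr rfl hcard
        _ = (S d).card * m := by rw [Finset.sum_const, smul_eq_mul]
    · intro u₁ hu₁ u₂ hu₂ hne
      rw [Function.onFun, Finset.disjoint_left]
      intro w hw₁ hw₂
      simp only [Finset.mem_filter, mem_neighborFinset] at hw₁ hw₂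
      rw [Finset.mem_coe, hSmem] at hu₁ hu₂
      exact hne (huniq w d (by omega) hw₁.2 u₁ u₂ hw₁.1.symm hw₂.1.symm hu₁ hu₂)
  -- degrees on spheres
  have hdeg1 : ∀ v : V, G.dist p v = 1 → G.degree v = f + 1 := by
    intro v hv
    have hr : G.Reachable p v := SimpleGraph.Reachable.of_dist_ne_zero (by omega)
    have := parity_dist v hr
    rw [hv] at this
    have hvP : v ∉ P := by simp [this]
    exact hdegL v (by rcases (huniv ▸ Set.mem_univ v : v ∈ P ∪ L) with h | h; exacts [absurd h hvP, h])
  have hdeg2 : ∀ v : V, G.dist p v = 2 → G.degree v = k + 1 := by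
    intro v hv
    have hr : G.Reachable p v := SimpleGraph.Reachable.of_dist_ne_zero (by omega)
    have := parity_dist v hr
    rw [hv] at this
    exact hdegP v (by simp [this])
  have hdeg3 : ∀ v : V, G.dist p v = 3 → G.degree v = f + 1 := by
    intro v hv
    have hr : G.Reachable p v := SimpleGraph.Reachable.of_dist_ne_zero (by omega)
    have := parity_dist v hr
    rw [hv] at this
    have hvP : v ∉ P := by simp [this, Nat.even_iff]
    exact hdegL v (by rcases (huniv ▸ Set.mem_univ v : v ∈ P ∪ L) with h | h; exacts [absurd h hvP, h])
  have hS2 : (S 2).card = (k + 1) * f := by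
    have := hstep 1 f (by omega) (by omega) hdeg1
    rw [this, hS1]
  have hS3 : (S 3).card = (k + 1) * f * k := by
    have := hstep 2 k (by omega) (by omega) hdeg2
    rw [this, hS2]
  have hS4 : (S 4).card = (k + 1) * f * k * f := by
    have := hstep 3 f (by omega) (by omega) hdeg3
    rw [this, hS3]
  -- identify the sets in the statement with the spheres
  have hset2 : {p' : V | p' ∈ P ∧ G.dist p p' = 2} = (S 2 : Set V) := by
    ext v
    simp only [Set.mem_setOf_eq, Finset.coe_filter, hSmem, Finset.mem_coe]
    constructor
    · rintro ⟨_, h⟩; exact h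
    · intro h
      refine ⟨?_, h⟩
      have hr : G.Reachable p v := SimpleGraph.Reachable.of_dist_ne_zero (by omega)
      have := parity_dist v hr
      rw [h] at this
      simp [this]
  have hset4 : {p' : V | p' ∈ P ∧ G.dist p p' = 4} = (S 4 : Set V) := by
    ext v
    simp only [Set.mem_setOf_eq, Finset.coe_filter, hSmem, Finset.mem_coe]
    constructor
    · rintro ⟨_, h⟩; exact h
    · intro h
      refine ⟨?_, h⟩
      have hr : G.Reachable p v := SimpleGraph.Reachable.of_dist_ne_zero (by omega)
      have := parity_dist v hr
      rw [h] at this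
      rw [this]
      decide
  constructor
  · rw [hset2, Set.ncard_coe_finset, hS2]
  · rw [hset4, Set.ncard_coe_finset, hS4]
    ring
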